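/- Let D be a coassociative counital coalgebra over a field k whose maximal cosemisimple subcoalgebra D^ss is finite-dimensional. Then any Noetherian left D-contramodule is co-Artinian. -/

import Mathlib

open TensorProduct LinearMap

section Contra

variable (k : Type) [Field k]
variable (D : Type) [AddCommGroup D] [Module k D] [Coalgebra k D]

/-- Axioms for a left `D`-contramodule structure given by a contraaction map `π`. -/
structure IsContra {P : Type} [AddCommGroup P] [Module k P]
    (π : (D →ₗ[k] P) →ₗ[k] P) : Prop where
  contraassoc : ∀ f : D ⊗[k] D →ₗ[k] P,
    π (f ∘ₗ CoalgebraStruct.comul (R := k) (A := D)) = π (π ∘ₗ TensorProduct.curry f)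
  contraunit : ∀ p : P,
    π ((CoalgebraStruct.counit (R := k) (A := D)).smulRight p) = p

/-- A `k`-linear map between contramodules is a contramodule morphism. -/
def IsContraHom {P Q : Type} [AddCommGroup P] [Module k P] [AddCommGroup Q] [Module k Q]
    (πP : (D →ₗ[k] P) →ₗ[k] P) (πQ : (D →ₗ[k] Q) →ₗ[k] Q) (f : P →ₗ[k] Q) : Prop :=
  ∀ g : D →ₗ[k] P, f (πP g) = πQ (f ∘ₗ g)

/-- The contraaction of the free left contramodule `Hom_k(D, V)`. -/
noncomputable def freeContraaction (V : Type) [AddCommGroup V] [Module k V] :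
    (D →ₗ[k] (D →ₗ[k] V)) →ₗ[k] (D →ₗ[k] V) :=
  (LinearMap.lcomp k V (CoalgebraStruct.comul (R := k) (A := D))) ∘ₗ
    TensorProduct.uncurry (RingHom.id k) D D V

/-- A contramodule is finitely generated if it is a quotient of a free contramodule
with a finite-dimensional space of generators. -/
def FinGenContra {P : Type} [AddCommGroup P] [Module k P]
    (π : (D →ₗ[k] P) →ₗ[k] P) : Prop :=
  ∃ (V : Type) (_ : AddCommGroup V) (_ : Module k V), FiniteDimensional k V ∧
    ∃ g : (D →ₗ[k] V) →ₗ[k] P, Function.Surjective g ∧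
      IsContraHom k D (freeContraaction k D V) π g

end Contra

open TensorProduct LinearMap

section Conil

variable (k : Type) [Field k]
variable (C : Type) [AddCommGroup C] [Module k C] [Coalgebra k C]

/-- The image of `A ⊗ B` in `C ⊗ C`, for submodules `A B ⊆ C`. -/
noncomputable def tensorSub (A B : Submodule k C) : Submodule k (C ⊗[k] C) :=
  LinearMap.range (TensorProduct.map A.subtype B.subtype)

/-- `conilChain k C E n` is the kernel of the `n`-fold iterated comultiplication map
`C → (C/E)^{⊗ (n+1)}`. -/
noncomputable def conilChain (E : Submodule k C) : ℕ → Submodule k C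
  | 0 => E
  | n + 1 => Submodule.comap (CoalgebraStruct.comul (R := k) (A := C))
      (tensorSub k C E ⊤ ⊔ tensorSub k C ⊤ (conilChain E n))

/-- The quotient of `C` by the subcoalgebra `E` is a conilpotent coalgebra without
counit: every element is annihilated by some iterated comultiplication map
`C → (C/E)^{⊗ (n+1)}`. -/
def ConilpotentQuotient (E : Submodule k C) : Prop :=
  ∀ c : C, ∃ n : ℕ, c ∈ conilChain k C E n

variable {E : Type} [AddCommGroup E] [Module k E] [Coalgebra k E]

/-- Given a subcoalgebra `ι : E → C` and a comodule coaction `ρ` on `M`, this is the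
maximal subcomodule `_E M` of `M` whose comodule structure comes from an `E`-comodule
structure; it is the full preimage of `E ⊗ M` under the coaction map. -/
noncomputable def maxSubcomodule {M : Type} [AddCommGroup M] [Module k M]
    (ι : E →ₗc[k] C) (ρ : M →ₗ[k] C ⊗[k] M) : Submodule k M :=
  Submodule.comap ρ (LinearMap.range (ι.toLinearMap.rTensor M))

end Conil

section MaxCosemisimple

variable (k : Type) [Field k]
variable (C : Type) [AddCommGroup C] [Module k C] [Coalgebra k C]

/-- A subspace `E ⊆ C` is a subcoalgebra if the comultiplication takes it into
the image of `E ⊗ E` in `C ⊗ C`. -/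
def IsSubcoalgebra (E : Submodule k C) : Prop :=
  ∀ x ∈ E, CoalgebraStruct.comul (R := k) (A := C) x ∈ tensorSub k C E E

/-- `E` is the maximal cosemisimple subcoalgebra `C^ss` of `C`: it is the minimal
subcoalgebra of `C` such that the quotient coalgebra without counit `C/E` is
conilpotent. -/
def IsMaxCosemisimple (E : Submodule k C) : Prop :=
  IsSubcoalgebra k C E ∧ ConilpotentQuotient k C E ∧
    ∀ E' : Submodule k C, IsSubcoalgebra k C E' → ConilpotentQuotient k C E' → E ≤ E'

end MaxCosemisimple

section ContraSub

variable (k : Type) [Field k]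
variable (D : Type) [AddCommGroup D] [Module k D] [Coalgebra k D]
variable {P : Type} [AddCommGroup P] [Module k P]

/-- A subspace `Q ⊆ P` is a subcontramodule if the contraaction takes every map
`D → P` with values in `Q` into `Q`. -/
def IsSubcontra (π : (D →ₗ[k] P) →ₗ[k] P) (Q : Submodule k P) : Prop :=
  ∀ g : D →ₗ[k] P, LinearMap.range g ≤ Q → π g ∈ Q

/-- A contraaction `π'` on a subspace `Q ⊆ P` is compatible with the contraaction `π`
on `P` if the inclusion `Q → P` is a morphism of contramodules.  For a subcontramodule
`Q` such a compatible contraaction exists and is unique; it is the canonical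
contramodule structure of the subcontramodule. -/
def CompatibleSubContraaction (π : (D →ₗ[k] P) →ₗ[k] P) (Q : Submodule k P)
    (π' : (D →ₗ[k] ↥Q) →ₗ[k] ↥Q) : Prop :=
  ∀ g : D →ₗ[k] ↥Q, (π' g : P) = π (Q.subtype ∘ₗ g)

/-- A contramodule is Noetherian if all its subcontramodules are finitely
generated (as contramodules, with their canonical induced structure). -/
def NoetherianContra (π : (D →ₗ[k] P) →ₗ[k] P) : Prop :=
  ∀ Q : Submodule k P, IsSubcontra k D π Q →
    ∃ π' : (D →ₗ[k] ↥Q) →ₗ[k] ↥Q,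
      CompatibleSubContraaction k D π Q π' ∧ FinGenContra k D π'

/-- A contramodule is co-Artinian if every ascending chain of its subcontramodules
terminates. -/
def CoArtinianContra (π : (D →ₗ[k] P) →ₗ[k] P) : Prop :=
  ∀ f : ℕ → Submodule k P, (∀ n, IsSubcontra k D π (f n)) →
    (∀ n, f n ≤ f (n + 1)) → ∃ n, ∀ m, n ≤ m → f m = f n

end ContraSub

namespace NCAux

open TensorProduct LinearMap Submodule

section KerMap

variable {k : Type} [Field k]
variable {M M' N N' : Type} [AddCommGroup M] [Module k M] [AddCommGroup M'] [Module k M']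
  [AddCommGroup N] [Module k N] [AddCommGroup N'] [Module k N']

lemma ker_rTensor_eq (f : M →ₗ[k] N) (W : Type) [AddCommGroup W] [Module k W] :
    ker (f.rTensor W) = range ((ker f).subtype.rTensor W) :=
  LinearMap.exact_iff.mp (Module.Flat.rTensor_exact (R := k) W (LinearMap.exact_subtype_ker_map f))

lemma ker_lTensor_eq (f : M →ₗ[k] N) (W : Type) [AddCommGroup W] [Module k W] :
    ker (f.lTensor W) = range ((ker f).subtype.lTensor W) :=
  LinearMap.exact_iff.mp (Module.Flat.lTensor_exact (R := k) W (LinearMap.exact_subtype_ker_map f))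

lemma ker_map_of_surjective (f : M →ₗ[k] N) (g : M' →ₗ[k] N')
    (hg : Function.Surjective g) :
    ker (TensorProduct.map f g)
      = range ((ker f).subtype.rTensor M') ⊔ range ((ker g).subtype.lTensor M) := by
  have h1 : TensorProduct.map f g = (f.rTensor N').comp (g.lTensor M) :=
    (LinearMap.rTensor_comp_lTensor (f := f) (g := g)).symm
  rw [h1, LinearMap.ker_comp, ker_rTensor_eq]
  have hnat : (g.lTensor M).comp ((ker f).subtype.rTensor M')
      = ((ker f).subtype.rTensor N').comp (g.lTensor (ker f)) := by
    rw [LinearMap.rTensor_comp_lTensor, LinearMap.lTensor_comp_rTensor]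
  have hsurj : Function.Surjective (g.lTensor (ker f)) := LinearMap.lTensor_surjective _ hg
  have e1 : range (((ker f).subtype.rTensor N').comp (g.lTensor (ker f)))
      = range ((ker f).subtype.rTensor N') :=
    LinearMap.range_comp_of_range_eq_top _ (LinearMap.range_eq_top.mpr hsurj)
  rw [← e1, ← hnat, LinearMap.range_comp, Submodule.comap_map_eq, ker_lTensor_eq]

lemma ker_map (f : M →ₗ[k] N) (g : M' →ₗ[k] N') :
    ker (TensorProduct.map f g)
      = range ((ker f).subtype.rTensor M') ⊔ range ((ker g).subtype.lTensor M) := by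
  have hfact : TensorProduct.map f g
      = (TensorProduct.map (range f).subtype (range g).subtype).comp
        (TensorProduct.map f.rangeRestrict g.rangeRestrict) := by
    rw [← TensorProduct.map_comp]
    congr 1
  have hinj : Function.Injective (TensorProduct.map (range f).subtype (range g).subtype) := by
    rw [← LinearMap.rTensor_comp_lTensor, LinearMap.coe_comp]
    exact (Module.Flat.rTensor_preserves_injective_linearMap _ (range f).injective_subtype).comp
      (Module.Flat.lTensor_preserves_injective_linearMap _ (range g).injective_subtype)
  rw [hfact, LinearMap.ker_comp, LinearMap.ker_eq_bot.mpr hinj, Submodule.comap_bot,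
    ker_map_of_surjective _ _ g.surjective_rangeRestrict,
    LinearMap.ker_rangeRestrict, LinearMap.ker_rangeRestrict]

end KerMap

section Wedge

variable {k : Type} [Field k]
variable {C : Type} [AddCommGroup C] [Module k C] [Coalgebra k C]
variable {N N' : Type} [AddCommGroup N] [Module k N] [AddCommGroup N'] [Module k N']

local notation "Δ" => CoalgebraStruct.comul (R := k) (A := C)

lemma top_subtype_surjective : Function.Surjective (⊤ : Submodule k C).subtype :=
  fun x => ⟨⟨x, trivial⟩, rfl⟩

lemma tensorSub_mono {A A' B B' : Submodule k C} (h1 : A ≤ A') (h2 : B ≤ B') :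
    tensorSub k C A B ≤ tensorSub k C A' B' :=
  TensorProduct.range_mapIncl_mono h1 h2

lemma tensorSub_eq_rTensor (A : Submodule k C) :
    tensorSub k C A ⊤ = range (A.subtype.rTensor C) := by
  unfold tensorSub
  rw [← LinearMap.rTensor_comp_lTensor, LinearMap.range_comp,
    LinearMap.range_eq_top.mpr (LinearMap.lTensor_surjective _ top_subtype_surjective),
    Submodule.map_top]

lemma tensorSub_eq_lTensor (B : Submodule k C) :
    tensorSub k C ⊤ B = range (B.subtype.lTensor C) := by
  unfold tensorSub
  rw [← LinearMap.lTensor_comp_rTensor, LinearMap.range_comp,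
    LinearMap.range_eq_top.mpr (LinearMap.rTensor_surjective _ top_subtype_surjective),
    Submodule.map_top]

lemma ker_map_eq_tensorSub (f : C →ₗ[k] N) (g : C →ₗ[k] N') :
    ker (TensorProduct.map f g) = tensorSub k C (ker f) ⊤ ⊔ tensorSub k C ⊤ (ker g) := by
  rw [ker_map, tensorSub_eq_rTensor, tensorSub_eq_lTensor]

/-- The wedge of two subspaces of a coalgebra. -/
noncomputable def wedge (X Y : Submodule k C) : Submodule k C :=
  Submodule.comap Δ (tensorSub k C X ⊤ ⊔ tensorSub k C ⊤ Y)

lemma wedge_ker (f : C →ₗ[k] N) (g : C →ₗ[k] N') :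
    ker (TensorProduct.map f g ∘ₗ Δ) = wedge (ker f) (ker g) := by
  rw [LinearMap.ker_comp, ker_map_eq_tensorSub]; rfl

lemma wedge_eq_ker (X Y : Submodule k C) :
    wedge X Y = ker (TensorProduct.map X.mkQ Y.mkQ ∘ₗ Δ) := by
  rw [wedge_ker, Submodule.ker_mkQ, Submodule.ker_mkQ]

lemma wedge_ker_left (f : C →ₗ[k] N) (Y : Submodule k C) :
    wedge (ker f) Y = ker (TensorProduct.map f Y.mkQ ∘ₗ Δ) := by
  rw [wedge_ker, Submodule.ker_mkQ]

lemma wedge_ker_right (X : Submodule k C) (g : C →ₗ[k] N') :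
    wedge X (ker g) = ker (TensorProduct.map X.mkQ g ∘ₗ Δ) := by
  rw [wedge_ker, Submodule.ker_mkQ]

lemma assoc_nat {A B C' A' B' C'' : Type} [AddCommGroup A] [Module k A] [AddCommGroup B]
    [Module k B] [AddCommGroup C'] [Module k C'] [AddCommGroup A'] [Module k A']
    [AddCommGroup B'] [Module k B'] [AddCommGroup C''] [Module k C'']
    (f : A →ₗ[k] A') (g : B →ₗ[k] B') (h : C' →ₗ[k] C'') :
    TensorProduct.map f (TensorProduct.map g h) ∘ₗ (TensorProduct.assoc k A B C').toLinearMap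
      = (TensorProduct.assoc k A' B' C'').toLinearMap
          ∘ₗ TensorProduct.map (TensorProduct.map f g) h := by
  apply TensorProduct.ext_threefold
  intro a b c
  simp

lemma wedge_assoc (X Y Z : Submodule k C) :
    wedge (wedge X Y) Z = wedge X (wedge Y Z) := by
  rw [wedge_eq_ker X Y, wedge_eq_ker Y Z, wedge_ker_left, wedge_ker_right]
  have e1 : TensorProduct.map (TensorProduct.map X.mkQ Y.mkQ ∘ₗ Δ) Z.mkQ
      = TensorProduct.map (TensorProduct.map X.mkQ Y.mkQ) Z.mkQ ∘ₗ LinearMap.rTensor C Δ := by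
    rw [LinearMap.map_comp_rTensor]
  have e2 : TensorProduct.map X.mkQ (TensorProduct.map Y.mkQ Z.mkQ ∘ₗ Δ)
      = TensorProduct.map X.mkQ (TensorProduct.map Y.mkQ Z.mkQ) ∘ₗ LinearMap.lTensor C Δ := by
    rw [LinearMap.map_comp_lTensor]
  have key : TensorProduct.map X.mkQ (TensorProduct.map Y.mkQ Z.mkQ ∘ₗ Δ) ∘ₗ Δ
      = (TensorProduct.assoc k _ _ _).toLinearMap
          ∘ₗ (TensorProduct.map (TensorProduct.map X.mkQ Y.mkQ ∘ₗ Δ) Z.mkQ ∘ₗ Δ) := by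
    rw [e1, e2]
    simp only [LinearMap.comp_assoc]
    rw [← Coalgebra.coassoc]
    simp only [← LinearMap.comp_assoc]
    rw [assoc_nat]
  conv_rhs => rw [key, LinearMap.ker_comp]
  rw [LinearEquiv.ker, Submodule.comap_bot]

lemma wedge_mono {X X' Y Y' : Submodule k C} (hX : X ≤ X') (hY : Y ≤ Y') :
    wedge X Y ≤ wedge X' Y' :=
  Submodule.comap_mono (sup_le_sup (tensorSub_mono hX le_rfl) (tensorSub_mono le_rfl hY))

variable (E : Submodule k C)

lemma conilChain_succ_eq (n : ℕ) : conilChain k C E (n + 1) = wedge E (conilChain k C E n) :=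
  rfl

/-- The opposite-oriented conilpotency filtration. -/
noncomputable def chainR : ℕ → Submodule k C
  | 0 => E
  | n + 1 => wedge (chainR n) E

lemma chain_comm (n : ℕ) :
    wedge (conilChain k C E n) E = wedge E (conilChain k C E n) := by
  induction n with
  | zero => rfl
  | succ n ih =>
    rw [conilChain_succ_eq, wedge_assoc, ih]

lemma conilChain_eq_chainR (n : ℕ) : conilChain k C E n = chainR E n := by
  induction n with
  | zero => rfl
  | succ n ih =>
    rw [conilChain_succ_eq, ← chain_comm, ih]
    rfl

lemma self_le_wedge (hsub : IsSubcoalgebra k C E) {X Y : Submodule k C}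
    (hX : E ≤ X) : E ≤ wedge X Y := fun c hc =>
  Submodule.mem_comap.mpr (le_sup_left (α := Submodule k (C ⊗[k] C))
    (tensorSub_mono hX le_top (hsub c hc)))

lemma conilChain_le_succ (hsub : IsSubcoalgebra k C E) (n : ℕ) :
    conilChain k C E n ≤ conilChain k C E (n + 1) := by
  induction n with
  | zero => exact self_le_wedge E hsub le_rfl
  | succ n ih => exact wedge_mono le_rfl ih

lemma conilChain_mono (hsub : IsSubcoalgebra k C E) : Monotone (conilChain k C E) :=
  monotone_nat_of_le_succ (conilChain_le_succ E hsub)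

end Wedge


section Contra3

variable {k : Type} [Field k]
variable {D : Type} [AddCommGroup D] [Module k D] [Coalgebra k D]
variable {P : Type} [AddCommGroup P] [Module k P]

local notation "Δ" => CoalgebraStruct.comul (R := k) (A := D)
local notation "ε" => CoalgebraStruct.counit (R := k) (A := D)

/-- The submodule of linear maps with values in a submodule `U`. -/
def homInto (U : Submodule k P) : Submodule k (D →ₗ[k] P) where
  carrier := {h | ∀ d, h d ∈ U}
  add_mem' := fun ha hb d => U.add_mem (ha d) (hb d)
  zero_mem' := fun _ => U.zero_mem
  smul_mem' := fun c _ hh d => U.smul_mem c (hh d)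

lemma mem_homInto {U : Submodule k P} {h : D →ₗ[k] P} :
    h ∈ homInto U ↔ ∀ d, h d ∈ U := Iff.rfl

/-- The submodule of linear maps vanishing on a submodule `X ⊆ D`. -/
def homKill (X : Submodule k D) : Submodule k (D →ₗ[k] P) where
  carrier := {h | ∀ d ∈ X, h d = 0}
  add_mem' := fun ha hb d hd => by
    simp only [LinearMap.add_apply, ha d hd, hb d hd, add_zero]
  zero_mem' := fun _ _ => rfl
  smul_mem' := fun c _ hh d hd => by
    simp only [LinearMap.smul_apply, hh d hd, smul_zero]

lemma mem_homKill {X : Submodule k D} {h : D →ₗ[k] P} :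
    h ∈ homKill X ↔ ∀ d ∈ X, h d = 0 := Iff.rfl

lemma curry_uncurry' (G : D →ₗ[k] (D →ₗ[k] P)) :
    TensorProduct.curry (TensorProduct.uncurry (RingHom.id k) D D P G) = G := by
  ext a b
  simp [TensorProduct.curry_apply]

lemma contraassoc' {π : (D →ₗ[k] P) →ₗ[k] P} (hP : IsContra k D π)
    (G : D →ₗ[k] (D →ₗ[k] P)) :
    π (TensorProduct.uncurry (RingHom.id k) D D P G ∘ₗ Δ) = π (π ∘ₗ G) := by
  have h := hP.contraassoc (TensorProduct.uncurry (RingHom.id k) D D P G)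
  rwa [curry_uncurry'] at h

lemma uncurry_kills_left {X : Submodule k D} (G : D →ₗ[k] (D →ₗ[k] P))
    (hX : ∀ d ∈ X, G d = 0) :
    ∀ t ∈ tensorSub k D X ⊤, TensorProduct.uncurry (RingHom.id k) D D P G t = 0 := by
  rintro _ ⟨s, rfl⟩
  induction s using TensorProduct.induction_on with
  | zero => simp
  | tmul a b =>
    rw [TensorProduct.map_tmul, TensorProduct.uncurry_apply,
      show G (X.subtype a) = 0 from hX _ a.2, LinearMap.zero_apply]
  | add x y hx hy => rw [map_add, map_add, hx, hy, add_zero]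

lemma uncurry_kills_right {Y : Submodule k D} (G : D →ₗ[k] (D →ₗ[k] P))
    (hY : ∀ a : D, ∀ d ∈ Y, G a d = 0) :
    ∀ t ∈ tensorSub k D ⊤ Y, TensorProduct.uncurry (RingHom.id k) D D P G t = 0 := by
  rintro _ ⟨s, rfl⟩
  induction s using TensorProduct.induction_on with
  | zero => simp
  | tmul a b =>
    rw [TensorProduct.map_tmul, TensorProduct.uncurry_apply]
    exact hY _ _ b.2
  | add x y hx hy => rw [map_add, map_add, hx, hy, add_zero]

lemma uncurry_kills {X Y : Submodule k D} (G : D →ₗ[k] (D →ₗ[k] P))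
    (hX : ∀ d ∈ X, G d = 0) (hY : ∀ a : D, ∀ d ∈ Y, G a d = 0) :
    ∀ c ∈ wedge X Y, (TensorProduct.uncurry (RingHom.id k) D D P G ∘ₗ Δ) c = 0 := by
  intro c hc
  obtain ⟨t1, ht1, t2, ht2, hsum⟩ := Submodule.mem_sup.mp (Submodule.mem_comap.mp hc)
  have : (Δ) c = t1 + t2 := hsum.symm
  rw [LinearMap.comp_apply, this, map_add, uncurry_kills_left G hX t1 ht1,
    uncurry_kills_right G hY t2 ht2, add_zero]

lemma uncurry_into {U : Submodule k P} (G : D →ₗ[k] (D →ₗ[k] P))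
    (hG : ∀ a d : D, G a d ∈ U) (t : D ⊗[k] D) : TensorProduct.uncurry (RingHom.id k) D D P G t ∈ U := by
  induction t using TensorProduct.induction_on with
  | zero => simp
  | tmul a b => simpa using hG a b
  | add x y hx hy => rw [map_add]; exact U.add_mem hx hy

end Contra3

section SumMap

variable {k : Type} [Field k]
variable {A B : Type} [AddCommGroup A] [Module k A] [AddCommGroup B] [Module k B]

lemma support_finite {Q : Type} [AddCommMonoid Q] (v : ℕ → Q) (N : ℕ)
    (hv : ∀ n, N ≤ n → v n = 0) : (Function.support v).Finite :=
  Set.Finite.subset (Set.finite_Iio N) fun n hn => by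
    simp only [Set.mem_Iio]
    by_contra hh
    exact hn (hv n (le_of_not_gt hh))

/-- Pointwise-finite sum of a sequence of linear maps. -/
noncomputable def sumMap (h : ℕ → (A →ₗ[k] B))
    (hb : ∀ c, ∃ N, ∀ n, N ≤ n → h n c = 0) : A →ₗ[k] B where
  toFun c := ∑ᶠ n, h n c
  map_add' x y := by
    obtain ⟨N1, h1⟩ := hb x
    obtain ⟨N2, h2⟩ := hb y
    have f1 : (Function.support fun n => h n x).Finite := support_finite _ N1 h1
    have f2 : (Function.support fun n => h n y).Finite := support_finite _ N2 h2
    simp only [map_add]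
    exact finsum_add_distrib f1 f2
  map_smul' c x := by
    obtain ⟨N1, h1⟩ := hb x
    simp only [map_smul, RingHom.id_apply]
    exact (AddMonoidHom.map_finsum (DistribMulAction.toAddMonoidHom B c)
      (support_finite _ N1 h1)).symm

lemma sumMap_apply (h : ℕ → (A →ₗ[k] B)) (hb) (c : A) :
    sumMap h hb c = ∑ᶠ n, h n c := rfl

lemma sumMap_eq_sum (h : ℕ → (A →ₗ[k] B)) (hb) (c : A) (N : ℕ)
    (hc : ∀ n, N ≤ n → h n c = 0) :
    sumMap h hb c = ∑ n ∈ Finset.range N, h n c := by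
  rw [sumMap_apply]
  exact finsum_eq_sum_of_support_subset _ (by
    intro n hn
    simp only [Finset.coe_range, Set.mem_Iio]
    by_contra hh
    exact hn (hc n (le_of_not_gt hh)))

end SumMap

end NCAux
namespace NCAux

section Nak

variable {k : Type} [Field k]
variable {D : Type} [AddCommGroup D] [Module k D] [Coalgebra k D]
variable {P : Type} [AddCommGroup P] [Module k P]

local notation "Δ" => CoalgebraStruct.comul (R := k) (A := D)

/-- The map `(q, g) ↦ q + π g`. -/
noncomputable def stageMap (π : (D →ₗ[k] P) →ₗ[k] P) (Q₀ : Submodule k P)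
    (K : Submodule k (D →ₗ[k] P)) : (↥Q₀ × ↥K) →ₗ[k] P :=
  Q₀.subtype ∘ₗ LinearMap.fst k ↥Q₀ ↥K + π ∘ₗ K.subtype ∘ₗ LinearMap.snd k ↥Q₀ ↥K

lemma stageMap_apply (π : (D →ₗ[k] P) →ₗ[k] P) (Q₀ : Submodule k P)
    (K : Submodule k (D →ₗ[k] P)) (z : ↥Q₀ × ↥K) :
    stageMap π Q₀ K z = (z.1 : P) + π (z.2 : D →ₗ[k] P) := rfl

/-- Contramodule Nakayama lemma: if `D/Dss` is conilpotent and every element of `P`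
is congruent modulo the subcontramodule `Q₀` to a contraaction value of a map
vanishing on `Dss`, then `Q₀` is everything. -/
theorem nak (Dss : Submodule k D) (hsub : IsSubcoalgebra k D Dss)
    (hconil : ConilpotentQuotient k D Dss)
    (π : (D →ₗ[k] P) →ₗ[k] P) (hP : IsContra k D π)
    (Q₀ : Submodule k P) (hQ₀ : IsSubcontra k D π Q₀)
    (hgen : ∀ x : P, ∃ q ∈ Q₀, ∃ g : D →ₗ[k] P, (∀ d ∈ Dss, g d = 0) ∧ x = q + π g) :
    ∀ x : P, x ∈ Q₀ := by
  set ch := conilChain k D Dss with hch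
  have hmono : Monotone ch := conilChain_mono Dss hsub
  set K : ℕ → Submodule k (D →ₗ[k] P) := fun n => homKill (ch n) with hK
  set Φ : (n : ℕ) → ((↥Q₀ × ↥(K n)) →ₗ[k] P) := fun n => stageMap π Q₀ (K n) with hΦ
  have sur0 : Function.Surjective (Φ 0) := by
    intro x
    obtain ⟨q, hq, g, hgk, hx⟩ := hgen x
    exact ⟨(⟨q, hq⟩, ⟨g, hgk⟩), hx.symm⟩
  have getsec : ∀ n, Function.Surjective (Φ n) →
      ∃ s : P →ₗ[k] (↥Q₀ × ↥(K n)),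
        ∀ y : P, y = ((s y).1 : P) + π ((s y).2 : D →ₗ[k] P) := by
    intro n hn
    obtain ⟨s, hs⟩ := (Φ n).exists_rightInverse_of_surjective (LinearMap.range_eq_top.mpr hn)
    refine ⟨s, fun y => ?_⟩
    have h := LinearMap.congr_fun hs y
    rw [LinearMap.comp_apply, LinearMap.id_apply] at h
    conv_lhs => rw [← h]
    rfl
  have sur : ∀ n, Function.Surjective (Φ n) := by
    intro n
    induction n with
    | zero => exact sur0
    | succ n ih =>
      obtain ⟨s0, hs0⟩ := getsec 0 sur0
      obtain ⟨sn, hsn⟩ := getsec n ih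
      intro x
      set g0 : D →ₗ[k] P := ((s0 x).2 : D →ₗ[k] P) with hg0
      set σn : P →ₗ[k] (D →ₗ[k] P) :=
        (K n).subtype ∘ₗ LinearMap.snd k ↥Q₀ ↥(K n) ∘ₗ sn with hσn
      set τn : P →ₗ[k] P := Q₀.subtype ∘ₗ LinearMap.fst k ↥Q₀ ↥(K n) ∘ₗ sn with hτn
      set G : D →ₗ[k] (D →ₗ[k] P) := σn ∘ₗ g0 with hG
      have hπG : π ∘ₗ G = g0 - τn ∘ₗ g0 := by
        ext d
        simp only [LinearMap.comp_apply, LinearMap.sub_apply, hG, hσn, hτn,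
          Submodule.coe_subtype]
        rw [eq_sub_iff_add_eq, add_comm]
        exact (hsn (g0 d)).symm
      have key : π g0 = π (TensorProduct.uncurry (RingHom.id k) D D P G ∘ₗ Δ) + π (τn ∘ₗ g0) := by
        rw [contraassoc' hP G, hπG, map_sub]
        abel
      have hkill : (TensorProduct.uncurry (RingHom.id k) D D P G ∘ₗ Δ) ∈ K (n + 1) := by
        intro d hd
        refine uncurry_kills (X := Dss) (Y := ch n) G ?_ ?_ d hd
        · intro d' hd'
          have : g0 d' = 0 := ((s0 x).2).2 d' hd'
          rw [hG, LinearMap.comp_apply, this, map_zero]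
        · intro a d' hd'
          rw [hG, LinearMap.comp_apply, hσn]
          exact ((sn (g0 a)).2).2 d' hd'
      have hrange : ∀ d : D, (τn ∘ₗ g0) d ∈ Q₀ := by
        intro d
        rw [LinearMap.comp_apply, hτn]
        exact Submodule.coe_mem _
      have hq' : ((s0 x).1 : P) + π (τn ∘ₗ g0) ∈ Q₀ :=
        Q₀.add_mem ((s0 x).1).2 (hQ₀ (τn ∘ₗ g0) (by rintro _ ⟨d, rfl⟩; exact hrange d))
      refine ⟨(⟨_, hq'⟩, ⟨_, hkill⟩), ?_⟩
      rw [hΦ, stageMap_apply]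
      have hx := hs0 x
      rw [← hg0, key] at hx
      show ((s0 x).1 : P) + π (τn ∘ₗ g0)
          + π (TensorProduct.uncurry (RingHom.id k) D D P G ∘ₗ Δ) = x
      conv_rhs => rw [hx]
      abel
  choose s hsProp using fun n => getsec n (sur n)
  set σl : ℕ → P →ₗ[k] (D →ₗ[k] P) :=
    fun n => (K n).subtype ∘ₗ LinearMap.snd k ↥Q₀ ↥(K n) ∘ₗ s n with hσl
  set τl : ℕ → P →ₗ[k] P :=
    fun n => Q₀.subtype ∘ₗ LinearMap.fst k ↥Q₀ ↥(K n) ∘ₗ s n with hτl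
  have hdec : ∀ n (y : P), y = τl n y + π (σl n y) := fun n y => hsProp n y
  have hτQ : ∀ n (y : P), τl n y ∈ Q₀ := fun n y => Submodule.coe_mem ((s n y).1)
  have hσK : ∀ n (y : P), ∀ d ∈ ch n, (σl n y) d = 0 := fun n y => ((s n y).2).2
  intro x
  set hseq : ℕ → (D →ₗ[k] P) := fun n =>
    Nat.rec (motive := fun _ => (D →ₗ[k] P)) (σl 0 x)
      (fun m hm => TensorProduct.uncurry (RingHom.id k) D D P (σl m ∘ₗ hm) ∘ₗ Δ) n with hhseq
  have hseq0 : hseq 0 = σl 0 x := rfl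
  have hseqS : ∀ n, hseq (n + 1)
      = TensorProduct.uncurry (RingHom.id k) D D P (σl n ∘ₗ hseq n) ∘ₗ Δ := fun _ => rfl
  have hkills : ∀ n, ∀ d ∈ ch n, hseq n d = 0 := by
    intro n
    induction n with
    | zero => exact hσK 0 x
    | succ n ih =>
      intro d hd
      rw [hseqS n]
      refine uncurry_kills (X := Dss) (Y := ch n) _ ?_ ?_ d hd
      · intro d' hd'
        rw [LinearMap.comp_apply, ih d' (hmono (Nat.zero_le n) hd'), map_zero]
      · intro a d' hd'
        rw [LinearMap.comp_apply]
        exact hσK n _ d' hd'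
  have hbound : ∀ (c : D), ∃ N, ∀ n, N ≤ n → hseq n c = 0 := by
    intro c
    obtain ⟨m, hm⟩ := hconil c
    exact ⟨m, fun n hn => hkills n c (hmono hn hm)⟩
  have hboundσ : ∀ (c : D), ∃ N, ∀ n, N ≤ n → (σl n ∘ₗ hseq n) c = 0 := fun c =>
    (hbound c).imp fun N hN n hn => by rw [LinearMap.comp_apply, hN n hn, map_zero]
  have hboundτ : ∀ (c : D), ∃ N, ∀ n, N ≤ n → (τl n ∘ₗ hseq n) c = 0 := fun c =>
    (hbound c).imp fun N hN n hn => by rw [LinearMap.comp_apply, hN n hn, map_zero]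
  have hbound' : ∀ (c : D), ∃ N, ∀ n, N ≤ n → hseq (n + 1) c = 0 := fun c =>
    (hbound c).imp fun N hN n hn => hN (n + 1) (le_trans hn (Nat.le_succ n))
  set g : D →ₗ[k] P := sumMap hseq hbound with hg
  set g' : D →ₗ[k] P := sumMap (fun n => hseq (n + 1)) hbound' with hg'
  set u : D →ₗ[k] P := sumMap (fun n => τl n ∘ₗ hseq n) hboundτ with hu
  set Ginf : D →ₗ[k] (D →ₗ[k] P) := sumMap (fun n => σl n ∘ₗ hseq n) hboundσ with hGinf
  have F1 : π ∘ₗ Ginf = g - u := by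
    ext c
    obtain ⟨N, hN⟩ := hbound c
    rw [LinearMap.comp_apply, LinearMap.sub_apply, hGinf,
      sumMap_eq_sum _ _ c N (fun n hn => by rw [LinearMap.comp_apply, hN n hn, map_zero]),
      hg, sumMap_eq_sum _ _ c N hN,
      hu, sumMap_eq_sum _ _ c N (fun n hn => by rw [LinearMap.comp_apply, hN n hn, map_zero]),
      map_sum, ← Finset.sum_sub_distrib]
    refine Finset.sum_congr rfl fun n _ => ?_
    rw [LinearMap.comp_apply, LinearMap.comp_apply, eq_sub_iff_add_eq, add_comm]
    exact (hdec n (hseq n c)).symm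
  have evU : ∀ t : D ⊗[k] D, ∃ N, ∀ n, N ≤ n →
      TensorProduct.uncurry (RingHom.id k) D D P (σl n ∘ₗ hseq n) t = 0 := by
    intro t
    induction t using TensorProduct.induction_on with
    | zero => exact ⟨0, fun n _ => map_zero _⟩
    | tmul a b =>
      obtain ⟨N, hN⟩ := hboundσ a
      refine ⟨N, fun n hn => ?_⟩
      show TensorProduct.uncurry (RingHom.id k) D D P (σl n ∘ₗ hseq n) (a ⊗ₜ[k] b) = 0
      rw [TensorProduct.uncurry_apply, hN n hn, LinearMap.zero_apply]
    | add x y hx hy =>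
      obtain ⟨N1, h1⟩ := hx
      obtain ⟨N2, h2⟩ := hy
      exact ⟨max N1 N2, fun n hn => by
        rw [map_add, h1 n (le_trans (le_max_left _ _) hn),
          h2 n (le_trans (le_max_right _ _) hn), add_zero]⟩
  have F2eq : ∀ t : D ⊗[k] D, TensorProduct.uncurry (RingHom.id k) D D P Ginf t
      = ∑ᶠ n, TensorProduct.uncurry (RingHom.id k) D D P (σl n ∘ₗ hseq n) t := by
    intro t
    induction t using TensorProduct.induction_on with
    | zero => simp
    | tmul a b =>
      obtain ⟨N, hN⟩ := hboundσ a
      rw [TensorProduct.uncurry_apply, hGinf, sumMap_eq_sum _ _ a N hN, LinearMap.sum_apply,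
        finsum_eq_sum_of_support_subset _ (s := Finset.range N) (by
          intro n hn
          simp only [Finset.coe_range, Set.mem_Iio]
          by_contra hh
          refine hn ?_
          show TensorProduct.uncurry (RingHom.id k) D D P (σl n ∘ₗ hseq n) (a ⊗ₜ[k] b) = 0
          rw [TensorProduct.uncurry_apply, hN n (le_of_not_gt hh), LinearMap.zero_apply])]
      refine Finset.sum_congr rfl fun n _ => ?_
      rw [TensorProduct.uncurry_apply]
    | add x y hx hy =>
      obtain ⟨N1, h1⟩ := evU x
      obtain ⟨N2, h2⟩ := evU y
      rw [map_add, hx, hy, ← finsum_add_distrib (support_finite _ N1 h1) (support_finite _ N2 h2)]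
      exact finsum_congr fun n => (map_add _ x y).symm
  have F2 : TensorProduct.uncurry (RingHom.id k) D D P Ginf ∘ₗ Δ = g' := by
    ext c
    rw [LinearMap.comp_apply, F2eq, hg', sumMap_apply]
    exact finsum_congr fun n => rfl
  have F3 : g = hseq 0 + g' := by
    ext c
    obtain ⟨N, hN⟩ := hbound c
    rw [LinearMap.add_apply, hg,
      sumMap_eq_sum _ _ c (N + 1) (fun n hn => hN n (le_trans (Nat.le_succ N) hn)),
      hg', sumMap_eq_sum _ _ c N (fun n hn => hN (n + 1) (le_trans hn (Nat.le_succ n))),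
      Finset.sum_range_succ']
    exact add_comm _ _
  have hπu : π u ∈ Q₀ := by
    refine hQ₀ u ?_
    rintro _ ⟨c, rfl⟩
    obtain ⟨N, hN⟩ := hboundτ c
    rw [hu, sumMap_eq_sum _ _ c N hN]
    exact Submodule.sum_mem _ fun n _ => hτQ n _
  have main : π (hseq 0) = π u := by
    have h3 : π g = π (hseq 0) + (π g - π u) := by
      conv_lhs => rw [F3]
      rw [map_add, ← F2, contraassoc' hP Ginf, F1, map_sub]
    have h4 : π (hseq 0) + (π g - π u) = π g := h3.symm
    have h5 : π (hseq 0) = π g - (π g - π u) := eq_sub_of_add_eq h4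
    rw [h5, sub_sub_cancel]
  have hx0 : x = τl 0 x + π (hseq 0) := hdec 0 x
  rw [hx0, main]
  exact Q₀.add_mem (hτQ 0 x) hπu

end Nak

end NCAux
namespace NCAux

section FreeS

variable {k : Type} [Field k]
variable {D : Type} [AddCommGroup D] [Module k D] [Coalgebra k D]

local notation "Δ" => CoalgebraStruct.comul (R := k) (A := D)
local notation "ε" => CoalgebraStruct.counit (R := k) (A := D)

/-- Contract the second tensor factor with a functional. -/
noncomputable def rlam (φ : D →ₗ[k] k) : D ⊗[k] D →ₗ[k] D :=
  (TensorProduct.rid k D).toLinearMap ∘ₗ φ.lTensor D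

lemma rlam_tmul (φ : D →ₗ[k] k) (a b : D) : rlam φ (a ⊗ₜ[k] b) = φ b • a := by
  simp [rlam]

/-- The operator `c ↦ Σ φ(c₂) c₁`. -/
noncomputable def Rmap (φ : D →ₗ[k] k) : D →ₗ[k] D := rlam φ ∘ₗ Δ

lemma Rmap_counit (c : D) : Rmap (ε) c = c := by
  have h : Rmap (ε) = (TensorProduct.rid k D).toLinearMap ∘ₗ ((ε).lTensor D ∘ₗ Δ) := by
    rw [Rmap, rlam, LinearMap.comp_assoc]
  rw [h, Coalgebra.lTensor_counit_comp_comul]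
  simp

lemma rlam_add (φ ψ : D →ₗ[k] k) (t : D ⊗[k] D) :
    rlam (φ + ψ) t = rlam φ t + rlam ψ t := by
  induction t using TensorProduct.induction_on with
  | zero => simp
  | tmul a b => rw [rlam_tmul, rlam_tmul, rlam_tmul, LinearMap.add_apply, add_smul]
  | add x y hx hy => rw [map_add, map_add, map_add, hx, hy]; abel

lemma rlam_left_mem (φ : D →ₗ[k] k) (A : Submodule k D) :
    ∀ t ∈ tensorSub k D A ⊤, rlam φ t ∈ A := by
  rintro _ ⟨s, rfl⟩
  induction s using TensorProduct.induction_on with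
  | zero => simp
  | tmul a b =>
    rw [TensorProduct.map_tmul, rlam_tmul]
    exact A.smul_mem _ a.2
  | add x y hx hy => rw [map_add, map_add]; exact A.add_mem hx hy

lemma rlam_right_zero (φ : D →ₗ[k] k) (B : Submodule k D) (hφ : ∀ x ∈ B, φ x = 0) :
    ∀ t ∈ tensorSub k D ⊤ B, rlam φ t = 0 := by
  rintro _ ⟨s, rfl⟩
  induction s using TensorProduct.induction_on with
  | zero => simp
  | tmul a b =>
    rw [TensorProduct.map_tmul, rlam_tmul, hφ (B.subtype b) b.2, zero_smul]
  | add x y hx hy => rw [map_add, map_add, hx, hy, add_zero]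

lemma Rmap_wedge (φ : D →ₗ[k] k) {X Y : Submodule k D} (hφ : ∀ x ∈ Y, φ x = 0) :
    ∀ c ∈ wedge X Y, Rmap φ c ∈ X := by
  intro c hc
  obtain ⟨t1, ht1, t2, ht2, hsum⟩ := Submodule.mem_sup.mp (Submodule.mem_comap.mp hc)
  have h : Rmap φ c = rlam φ t1 + rlam φ t2 := by
    rw [Rmap, LinearMap.comp_apply, ← hsum, map_add]
  rw [h, rlam_right_zero φ Y hφ t2 ht2, add_zero]
  exact rlam_left_mem φ X t1 ht1

lemma Rmap_sub_zero (φ : D →ₗ[k] k) (E : Submodule k D) (hsub : IsSubcoalgebra k D E)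
    (hφ : ∀ x ∈ E, φ x = 0) : ∀ d ∈ E, Rmap φ d = 0 := by
  intro d hd
  rw [Rmap, LinearMap.comp_apply]
  exact rlam_right_zero φ E hφ _ (tensorSub_mono le_top le_rfl (hsub d hd))

/-- Reduction of the free contramodule: every map `D → V` vanishing on `Dss` is the
free contraaction of a map vanishing on `Dss`. -/
theorem free_reduction (Dss : Submodule k D) (hsub : IsSubcoalgebra k D Dss)
    (hconil : ConilpotentQuotient k D Dss)
    (lam nu : D →ₗ[k] k)
    (hsum : ∀ c : D, (ε) c = lam c + nu c)
    (hlam : ∀ d ∈ Dss, lam d = 0)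
    (V : Type) [AddCommGroup V] [Module k V]
    (f : D →ₗ[k] V) (hf : ∀ d ∈ Dss, f d = 0) :
    ∃ G : D →ₗ[k] (D →ₗ[k] V), (∀ d ∈ Dss, G d = 0) ∧ freeContraaction k D V G = f := by
  set R : D →ₗ[k] D := Rmap lam with hR
  have hexh : ∀ c : D, ∃ n, c ∈ chainR Dss n := by
    intro c
    obtain ⟨n, hn⟩ := hconil c
    exact ⟨n, (conilChain_eq_chainR Dss n) ▸ hn⟩
  have hRE : ∀ d ∈ Dss, R d = 0 := Rmap_sub_zero lam Dss hsub hlam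
  have hRchain : ∀ n, ∀ c ∈ chainR Dss (n + 1), R c ∈ chainR Dss n :=
    fun n c hc => Rmap_wedge lam hlam c hc
  set Rit : ℕ → (D →ₗ[k] D) := fun j =>
    Nat.rec (motive := fun _ => (D →ₗ[k] D)) LinearMap.id (fun _ hj => hj ∘ₗ R) j with hRit
  have hRit0 : Rit 0 = LinearMap.id := rfl
  have hRitS : ∀ j, Rit (j + 1) = Rit j ∘ₗ R := fun _ => rfl
  have hvan : ∀ m, ∀ c ∈ chainR Dss m, ∀ j, m + 1 ≤ j → Rit j c = 0 := by
    intro m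
    induction m with
    | zero =>
      intro c hc j hj
      cases j with
      | zero => omega
      | succ j' =>
        rw [hRitS, LinearMap.comp_apply, hRE c hc, map_zero]
    | succ m ih =>
      intro c hc j hj
      cases j with
      | zero => omega
      | succ j' =>
        rw [hRitS, LinearMap.comp_apply]
        exact ih (R c) (hRchain m c hc) j' (by omega)
  have hboundf : ∀ c : D, ∃ N, ∀ j, N ≤ j → (f ∘ₗ Rit j) c = 0 := by
    intro c
    obtain ⟨m, hm⟩ := hexh c
    exact ⟨m + 1, fun j hj => by
      rw [LinearMap.comp_apply, hvan m c hm j hj, map_zero]⟩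
  set s : D →ₗ[k] V := sumMap (fun j => f ∘ₗ Rit j) hboundf with hs
  set G : D →ₗ[k] (D →ₗ[k] V) :=
    { toFun := fun a => nu.smulRight (s a)
      map_add' := fun a b => by
        ext d
        simp only [LinearMap.smulRight_apply, map_add, LinearMap.add_apply, smul_add]
      map_smul' := fun c a => by
        ext d
        simp only [LinearMap.smulRight_apply, map_smul, RingHom.id_apply,
          LinearMap.smul_apply]
        rw [smul_comm] } with hG
  have hGapp : ∀ a : D, G a = nu.smulRight (s a) := fun _ => rfl
  have hsE : ∀ d ∈ Dss, s d = 0 := by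
    intro d hd
    rw [hs, sumMap_eq_sum _ _ d 1 (fun j hj => by
      cases j with
      | zero => omega
      | succ j' =>
        rw [LinearMap.comp_apply, hRitS, LinearMap.comp_apply, hRE d hd, map_zero, map_zero])]
    rw [Finset.sum_range_one, LinearMap.comp_apply, hRit0, LinearMap.id_apply]
    exact hf d hd
  refine ⟨G, ?_, ?_⟩
  · intro d hd
    ext b
    rw [hGapp, LinearMap.smulRight_apply, hsE d hd, smul_zero, LinearMap.zero_apply]
  · have huncurry : TensorProduct.uncurry (RingHom.id k) D D V G = s ∘ₗ rlam nu := by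
      apply TensorProduct.ext'
      intro a b
      rw [TensorProduct.uncurry_apply, LinearMap.comp_apply, rlam_tmul, map_smul, hGapp,
        LinearMap.smulRight_apply]
    have hfree : freeContraaction k D V G = s ∘ₗ Rmap nu := by
      show (TensorProduct.uncurry (RingHom.id k) D D V G) ∘ₗ Δ = s ∘ₗ Rmap nu
      rw [huncurry, Rmap, LinearMap.comp_assoc]
    rw [hfree]
    ext c
    rw [LinearMap.comp_apply]
    -- Rmap nu c = c - R c
    have hRnu : Rmap nu c = c - R c := by
      have h1 : Rmap (ε) c = Rmap lam c + Rmap nu c := by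
        have : (ε) = lam + nu := by ext d; exact hsum d
        rw [this, Rmap, LinearMap.comp_apply, rlam_add, Rmap, Rmap, LinearMap.comp_apply,
          LinearMap.comp_apply]
      rw [eq_sub_iff_add_eq, add_comm, ← h1, Rmap_counit]
    rw [hRnu, map_sub]
    obtain ⟨m, hm⟩ := hexh c
    have hNc : ∀ j, m + 1 ≤ j → (f ∘ₗ Rit j) c = 0 :=
      fun j hj => by rw [LinearMap.comp_apply, hvan m c hm j hj, map_zero]
    have hNRc : ∀ j, m + 1 ≤ j → (f ∘ₗ Rit j) (R c) = 0 := by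
      intro j hj
      have heq : (f ∘ₗ Rit j) (R c) = (f ∘ₗ Rit (j + 1)) c := rfl
      rw [heq]
      exact hNc (j + 1) (by omega)
    rw [hs, sumMap_eq_sum _ _ c (m + 2) (fun j hj => hNc j (by omega)),
      sumMap_eq_sum _ _ (R c) (m + 1) hNRc, Finset.sum_range_succ']
    have hshift : ∀ i, (f ∘ₗ Rit (i + 1)) c = (f ∘ₗ Rit i) (R c) := fun i => rfl
    rw [Finset.sum_congr rfl (fun i _ => hshift i)]
    simp only [LinearMap.comp_apply, hRit0, LinearMap.id_apply]
    abel
  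
end FreeS

end NCAux
namespace NCAux

section Endgame

variable {k : Type} [Field k]
variable {D : Type} [AddCommGroup D] [Module k D] [Coalgebra k D]
variable {P : Type} [AddCommGroup P] [Module k P]

local notation "Δ" => CoalgebraStruct.comul (R := k) (A := D)
local notation "ε" => CoalgebraStruct.counit (R := k) (A := D)

lemma isContra_sub (π : (D →ₗ[k] P) →ₗ[k] P) (hP : IsContra k D π) (Q : Submodule k P)
    (π' : (D →ₗ[k] ↥Q) →ₗ[k] ↥Q) (hc : CompatibleSubContraaction k D π Q π') :
    IsContra k D π' := by
  constructor
  · intro f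
    apply Subtype.coe_injective
    show ((π' (f ∘ₗ Δ)) : P) = ((π' (π' ∘ₗ TensorProduct.curry f)) : P)
    rw [hc, hc]
    have h1 : Q.subtype ∘ₗ (f ∘ₗ Δ) = (Q.subtype ∘ₗ f) ∘ₗ Δ :=
      (LinearMap.comp_assoc _ _ _).symm
    rw [h1, hP.contraassoc (Q.subtype ∘ₗ f)]
    congr 1
    ext a
    have h2 : TensorProduct.curry (Q.subtype ∘ₗ f) a
        = Q.subtype ∘ₗ TensorProduct.curry f a := by
      ext b
      simp [TensorProduct.curry_apply]
    rw [LinearMap.comp_apply, LinearMap.comp_apply, LinearMap.comp_apply, h2, ← hc]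
    rfl
  · intro p
    apply Subtype.coe_injective
    show ((π' ((ε).smulRight p)) : P) = (p : P)
    rw [hc]
    have h1 : Q.subtype ∘ₗ (ε).smulRight p = (ε).smulRight (p : P) := by
      ext d
      simp
    rw [h1, hP.contraunit]

/-- The subcontramodule generated by (the maps into) a submodule `X`. -/
noncomputable def piClosure (π : (D →ₗ[k] P) →ₗ[k] P) (X : Submodule k P) : Submodule k P :=
  Submodule.map π (homInto X)

lemma le_piClosure (π : (D →ₗ[k] P) →ₗ[k] P) (hP : IsContra k D π) (X : Submodule k P) :
    X ≤ piClosure π X := by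
  intro x hx
  refine ⟨(ε).smulRight x, fun d => ?_, hP.contraunit x⟩
  rw [LinearMap.smulRight_apply]
  exact X.smul_mem _ hx

lemma piClosure_subcontra (π : (D →ₗ[k] P) →ₗ[k] P) (hP : IsContra k D π)
    (X : Submodule k P) : IsSubcontra k D π (piClosure π X) := by
  intro g hg
  set Q := piClosure π X with hQ
  have hmem : ∀ h : ↥(homInto X), π ((homInto X).subtype h) ∈ Q :=
    fun h => ⟨(homInto X).subtype h, h.2, rfl⟩
  set πr : ↥(homInto X) →ₗ[k] ↥Q :=
    (π.domRestrict (homInto X)).codRestrict Q hmem with hπr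
  have hπrsur : Function.Surjective πr := by
    rintro ⟨y, h, hh, hy⟩
    exact ⟨⟨h, hh⟩, Subtype.ext hy⟩
  obtain ⟨σ, hσ⟩ := πr.exists_rightInverse_of_surjective (LinearMap.range_eq_top.mpr hπrsur)
  set gq : D →ₗ[k] ↥Q := g.codRestrict Q (fun d => hg ⟨d, rfl⟩) with hgq
  set G : D →ₗ[k] (D →ₗ[k] P) := (homInto X).subtype ∘ₗ σ ∘ₗ gq with hG
  have hπG : π ∘ₗ G = g := by
    ext d
    have h1 := LinearMap.congr_fun hσ (gq d)
    rw [LinearMap.comp_apply, LinearMap.id_apply] at h1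
    have h2 : π ((homInto X).subtype (σ (gq d))) = ((πr (σ (gq d))) : P) := rfl
    rw [LinearMap.comp_apply, LinearMap.comp_apply, LinearMap.comp_apply, h2, h1]
    rfl
  rw [← hπG, ← contraassoc' hP G]
  refine ⟨TensorProduct.uncurry (RingHom.id k) D D P G ∘ₗ Δ, fun c => ?_, rfl⟩
  rw [LinearMap.comp_apply]
  exact uncurry_into G (fun a d => (σ (gq a)).2 d) _

/-- The `Dss`-coaugmentation part of a subcontramodule. -/
noncomputable def Npart (π : (D →ₗ[k] P) →ₗ[k] P) (Dss : Submodule k D)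
    (Q : Submodule k P) : Submodule k P :=
  Submodule.map π (homInto Q ⊓ homKill Dss)

lemma Npart_le (π : (D →ₗ[k] P) →ₗ[k] P) (Dss : Submodule k D) (Q : Submodule k P)
    (hQ : IsSubcontra k D π Q) : Npart π Dss Q ≤ Q := by
  rintro _ ⟨g, ⟨hgInto, _⟩, rfl⟩
  exact hQ g (by rintro _ ⟨d, rfl⟩; exact hgInto d)

/-- Claim B': the π-closure of `U` is contained in `U` plus the coaugmentation part,
provided `U` is stable under the `D^*`-action. -/
lemma Bprime (π : (D →ₗ[k] P) →ₗ[k] P) (Dss : Submodule k D)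
    [FiniteDimensional k ↥Dss]
    (pr : D →ₗ[k] ↥Dss) (hpr : ∀ e : ↥Dss, pr (e : D) = e)
    (U : Submodule k P)
    (hU : ∀ (lam : D →ₗ[k] k) (x : P), x ∈ U → π (lam.smulRight x) ∈ U)
    (hUQ : U ≤ piClosure π U) :
    piClosure π U ≤ U ⊔ Npart π Dss (piClosure π U) := by
  rintro _ ⟨h, hh, rfl⟩
  set p : D →ₗ[k] D := Dss.subtype ∘ₗ pr with hp
  have hsplit : h = h ∘ₗ p + h ∘ₗ (LinearMap.id - p) := by
    ext d
    simp only [LinearMap.add_apply, LinearMap.comp_apply, LinearMap.sub_apply,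
      LinearMap.id_apply, map_sub]
    abel
  have hmem2 : π (h ∘ₗ (LinearMap.id - p)) ∈ Npart π Dss (piClosure π U) := by
    refine ⟨h ∘ₗ (LinearMap.id - p), ⟨fun d => ?_, fun d hd => ?_⟩, rfl⟩
    · exact hUQ (hh _)
    · have hpd : p d = d := by
        rw [hp, LinearMap.comp_apply, show pr d = pr ((⟨d, hd⟩ : ↥Dss) : D) from rfl,
          hpr ⟨d, hd⟩]
        rfl
      rw [LinearMap.comp_apply, LinearMap.sub_apply, LinearMap.id_apply, hpd, sub_self,
        map_zero]
  have hmem1 : π (h ∘ₗ p) ∈ U := by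
    classical
    set b := Module.finBasis k ↥Dss with hb
    have hdecomp : h ∘ₗ p = ∑ i, ((b.coord i) ∘ₗ pr).smulRight (h ((b i : D))) := by
      ext d
      rw [LinearMap.comp_apply, LinearMap.sum_apply]
      have hpd : p d = ∑ i, (b.repr (pr d)) i • ((b i : D)) := by
        rw [hp, LinearMap.comp_apply]
        conv_lhs => rw [show pr d = ∑ i, (b.repr (pr d)) i • b i from (b.sum_repr (pr d)).symm]
        rw [map_sum]
        refine Finset.sum_congr rfl fun i _ => ?_
        rw [map_smul]
        rfl
      rw [hpd, map_sum]
      refine Finset.sum_congr rfl fun i _ => ?_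
      rw [map_smul, LinearMap.smulRight_apply, LinearMap.comp_apply, Module.Basis.coord_apply]
    rw [hdecomp, map_sum]
    exact U.sum_mem fun i _ => hU _ _ (hh _)
  have hfin : π h = π (h ∘ₗ p) + π (h ∘ₗ (LinearMap.id - p)) := by
    conv_lhs => rw [hsplit]
    rw [map_add]
  rw [hfin]
  exact Submodule.add_mem _ (Submodule.mem_sup_left hmem1) (Submodule.mem_sup_right hmem2)

end Endgame

end NCAux
/-- Lemma 1.6(b): if the maximal cosemisimple subcoalgebra `D^ss ⊆ D` is
finite-dimensional, then any Noetherian left `D`-contramodule is co-Artinian. -/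
theorem noetherian_contramodule_coArtinian
    (k : Type) [Field k]
    (D : Type) [AddCommGroup D] [Module k D] [Coalgebra k D]
    (Dss : Submodule k D) (hss : IsMaxCosemisimple k D Dss)
    (hfin : FiniteDimensional k ↥Dss)
    (P : Type) [AddCommGroup P] [Module k P]
    (π : (D →ₗ[k] P) →ₗ[k] P) (hP : IsContra k D π)
    (hno : NoetherianContra k D π) :
    CoArtinianContra k D π := by
  classical
  obtain ⟨hsub, hconil, -⟩ := hss
  haveI := hfin
  intro f hfsub hfle
  have hfmono : Monotone f := monotone_nat_of_le_succ hfle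
  set U : Submodule k P := ⨆ n, f n with hU
  have hmemU : ∀ x : P, x ∈ U ↔ ∃ n, x ∈ f n := fun x =>
    Submodule.mem_iSup_of_directed f hfmono.directed_le
  set Q : Submodule k P := NCAux.piClosure π U with hQ
  have hUQ : U ≤ Q := NCAux.le_piClosure π hP U
  have hQsub : IsSubcontra k D π Q := NCAux.piClosure_subcontra π hP U
  set NQ : Submodule k P := NCAux.Npart π Dss Q with hNQ
  -- projection onto Dss
  obtain ⟨F, hF⟩ := Submodule.exists_isCompl Dss
  set pr : D →ₗ[k] ↥Dss := Submodule.linearProjOfIsCompl Dss F hF with hprdef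
  have hprl : ∀ e : ↥Dss, pr (e : D) = e := fun e =>
    Submodule.linearProjOfIsCompl_apply_left hF e
  set p : D →ₗ[k] D := Dss.subtype ∘ₗ pr with hpdef
  have hpd : ∀ d ∈ Dss, p d = d := by
    intro d hd
    rw [hpdef, LinearMap.comp_apply, show pr d = pr ((⟨d, hd⟩ : ↥Dss) : D) from rfl, hprl]
    rfl
  set nu : D →ₗ[k] k := CoalgebraStruct.counit ∘ₗ p with hnudef
  set lam : D →ₗ[k] k := CoalgebraStruct.counit - nu with hlamdef
  have hsumln : ∀ c : D, CoalgebraStruct.counit (R := k) (A := D) c = lam c + nu c := by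
    intro c
    rw [hlamdef]
    simp
  have hlamE : ∀ d ∈ Dss, lam d = 0 := by
    intro d hd
    rw [hlamdef, LinearMap.sub_apply, hnudef, LinearMap.comp_apply, hpd d hd, sub_self]
  -- B'
  have hUstab : ∀ (l : D →ₗ[k] k) (x : P), x ∈ U → π (l.smulRight x) ∈ U := by
    intro l x hx
    obtain ⟨n, hn⟩ := (hmemU x).mp hx
    refine (hmemU _).mpr ⟨n, hfsub n (l.smulRight x) ?_⟩
    rintro _ ⟨d, rfl⟩
    rw [LinearMap.smulRight_apply]
    exact (f n).smul_mem _ hn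
  have hB' : Q ≤ U ⊔ NQ := NCAux.Bprime π Dss pr hprl U hUstab hUQ
  -- Noetherian: Q is finitely generated
  obtain ⟨π', hcompat, V, iAG, iMod, hfinV, Γ, hΓsur, hΓhom⟩ := hno Q hQsub
  letI := iAG
  letI := iMod
  haveI := hfinV
  -- Claim A
  set J : (↥Dss →ₗ[k] V) →ₗ[k] (D →ₗ[k] V) := LinearMap.lcomp k V pr with hJ
  set W : Submodule k P := LinearMap.range (Q.subtype ∘ₗ Γ ∘ₗ J) with hW
  have hWQ : W ≤ Q := by
    rintro _ ⟨h, rfl⟩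
    exact Submodule.coe_mem _
  have hWfin : FiniteDimensional k ↥W := by
    haveI : FiniteDimensional k (↥Dss →ₗ[k] V) := Module.Finite.linearMap k k (↥Dss) V
    exact LinearMap.finiteDimensional_range (Q.subtype ∘ₗ Γ ∘ₗ J)
  have hA : ∀ x ∈ Q, ∃ w ∈ W, ∃ z ∈ NQ, x = w + z := by
    intro x hx
    obtain ⟨xq, hxq⟩ := hΓsur ⟨x, hx⟩
    set g : D →ₗ[k] V := xq - xq ∘ₗ p with hg
    have hgE : ∀ d ∈ Dss, g d = 0 := by
      intro d hd
      rw [hg, LinearMap.sub_apply, LinearMap.comp_apply, hpd d hd, sub_self]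
    obtain ⟨G, hGE, hGfree⟩ :=
      NCAux.free_reduction Dss hsub hconil lam nu hsumln hlamE V g hgE
    refine ⟨((Γ (xq ∘ₗ p) : ↥Q) : P), ?_, ((Γ g : ↥Q) : P), ?_, ?_⟩
    · refine ⟨xq ∘ₗ Dss.subtype, ?_⟩
      rw [LinearMap.comp_apply, LinearMap.comp_apply]
      congr 1
    · rw [← hGfree, hΓhom G, hcompat]
      refine ⟨Q.subtype ∘ₗ (Γ ∘ₗ G), Submodule.mem_inf.mpr ⟨fun d => ?_, fun d hd => ?_⟩, rfl⟩
      · exact Submodule.coe_mem _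
      · rw [LinearMap.comp_apply, LinearMap.comp_apply, hGE d hd, map_zero]
        exact map_zero _
    · have hxqsplit : xq = (xq ∘ₗ p) + g := by
        rw [hg]
        abel
      have h2 : Γ xq = Γ (xq ∘ₗ p) + Γ g := by
        conv_lhs => rw [hxqsplit]
        rw [map_add]
      have h1 : x = ((Γ xq : ↥Q) : P) := by rw [hxq]
      rw [h1, h2, Submodule.coe_add]
  -- finite spanning of W
  obtain ⟨S, hS⟩ := (Submodule.fg_iff_finiteDimensional W).mpr hWfin
  have hWdec : ∀ w ∈ W, ∃ n, w ∈ f n ⊔ NQ := by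
    intro w hw
    obtain ⟨u, hu, z, hz, hsum'⟩ := Submodule.mem_sup.mp (hB' (hWQ hw))
    obtain ⟨n, hn⟩ := (hmemU u).mp hu
    refine ⟨n, ?_⟩
    rw [← hsum']
    exact Submodule.add_mem _ (Submodule.mem_sup_left hn) (Submodule.mem_sup_right hz)
  choose! nfun hnfun using hWdec
  set N : ℕ := S.sup nfun with hN
  have hWle : W ≤ f N ⊔ NQ := by
    rw [← hS, Submodule.span_le]
    intro w hw
    have hwW : w ∈ W := by
      rw [← hS]
      exact Submodule.subset_span hw
    exact sup_le_sup (hfmono (Finset.le_sup hw)) le_rfl (hnfun w hwW)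
  have hQle : Q ≤ f N ⊔ NQ := by
    intro x hx
    obtain ⟨w, hw, z, hz, rfl⟩ := hA x hx
    exact Submodule.add_mem _ (hWle hw) (Submodule.mem_sup_right hz)
  -- Nakayama on Q
  have hP' : IsContra k D π' := NCAux.isContra_sub π hP Q π' hcompat
  set Q₀ : Submodule k ↥Q := Submodule.comap Q.subtype (f N) with hQ₀
  have hQ₀sub : IsSubcontra k D π' Q₀ := by
    intro g hg
    show ((π' g : ↥Q) : P) ∈ f N
    rw [hcompat g]
    refine hfsub N _ ?_
    rintro _ ⟨d, rfl⟩
    exact hg ⟨d, rfl⟩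
  have hgen : ∀ x : ↥Q, ∃ q ∈ Q₀, ∃ g : D →ₗ[k] ↥Q,
      (∀ d ∈ Dss, g d = 0) ∧ x = q + π' g := by
    intro x
    obtain ⟨a, ha, z, hz, hsum'⟩ := Submodule.mem_sup.mp (hQle x.2)
    obtain ⟨gb, hgbmem, hgb⟩ := hz
    obtain ⟨hbInto, hbKill⟩ := Submodule.mem_inf.mp hgbmem
    set gq : D →ₗ[k] ↥Q := gb.codRestrict Q hbInto with hgqdef
    have hcoe : Q.subtype ∘ₗ gq = gb := by
      ext d
      rfl
    have hπgq : ((π' gq : ↥Q) : P) = z := by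
      rw [hcompat gq, hcoe, hgb]
    have haQ : a ∈ Q := by
      have hax : a = (x : P) - z := by
        rw [← hsum']
        abel
      rw [hax, ← hπgq]
      exact Q.sub_mem x.2 (Submodule.coe_mem _)
    refine ⟨⟨a, haQ⟩, ha, gq, fun d hd => ?_, ?_⟩
    · apply Subtype.coe_injective
      show gb d = (0 : P)
      exact hbKill d hd
    · apply Subtype.coe_injective
      show (x : P) = a + ((π' gq : ↥Q) : P)
      rw [hπgq, ← hsum']
  have hnak := NCAux.nak Dss hsub hconil π' hP' Q₀ hQ₀sub hgen
  have hQfN : Q ≤ f N := fun y hy => hnak ⟨y, hy⟩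
  refine ⟨N, fun m hm => le_antisymm ?_ (hfmono hm)⟩
  exact le_trans (le_trans (le_iSup f m) hUQ) hQfN
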